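/- arXiv:2506.15660 — 3 statements merged into one kernel-verified Lean document; each statement's English description precedes it below -/
import Mathlib

section
/- Let A ∈ ℝ^{m×n} be a nonzero matrix with effective rank ρ = ‖A‖_F²/‖A‖² satisfying ρ ≥ 7, let X₁, X₂ be independent standard Gaussian vectors in ℝⁿ, and let θ ≥ 1. Then the Counterbalance estimator satisfies P(T^cb(θ,X) ≤ ‖A‖) ≤ θ⁻⁴/8. -/
open MeasureTheory ProbabilityTheory Real Matrix

/-- Spectral norm (ℓ²→ℓ² operator norm) of a real matrix. -/
noncomputable def matrixSpectralNorm {m n : ℕ} (A : Matrix (Fin m) (Fin n) ℝ) : ℝ :=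
  ‖LinearMap.toContinuousLinearMap (Matrix.toEuclideanLin A)‖

/-- Frobenius norm of a real matrix. -/
noncomputable def frobeniusNorm {m n : ℕ} (A : Matrix (Fin m) (Fin n) ℝ) : ℝ :=
  Real.sqrt (∑ i, ∑ j, (A i j) ^ 2)

/-- Effective rank `ρ = ‖A‖_F² / ‖A‖²`. -/
noncomputable def effectiveRank {m n : ℕ} (A : Matrix (Fin m) (Fin n) ℝ) : ℝ :=
  frobeniusNorm A ^ 2 / matrixSpectralNorm A ^ 2

/-- The standard Gaussian measure on `EuclideanSpace ℝ (Fin n)`: the law of a random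
vector with i.i.d. `N(0,1)` coordinates. -/
noncomputable def stdGaussian (n : ℕ) : Measure (EuclideanSpace ℝ (Fin n)) :=
  (Measure.pi fun _ : Fin n => gaussianReal 0 1).map
    (MeasurableEquiv.toLp 2 (Fin n → ℝ))

/-- CDF of the chi-squared distribution with one degree of freedom:
`χ₁²(t) = P(ξ² ≤ t)` for `ξ ~ N(0,1)`. -/
noncomputable def chiSq1CDF (t : ℝ) : ℝ :=
  ((gaussianReal 0 1) {x : ℝ | x ^ 2 ≤ t}).toReal

/-- Density of the chi-squared distribution with one degree of freedom:
`p₁(u) = e^{-u/2} / √(2 π u)`. -/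
noncomputable def chiSq1PDF (u : ℝ) : ℝ :=
  Real.exp (-u / 2) / Real.sqrt (2 * Real.pi * u)

/-- Density `p_{(1,α)}` of `ξ² + α η²` for `ξ, η` i.i.d. `N(0,1)`:
`p_{(1,α)}(t) = ∫₀^t p₁(s) (1/α) p₁((t-s)/α) ds`. -/
noncomputable def weightedChiSqPDF (α : ℝ) (t : ℝ) : ℝ :=
  ∫ s in (0:ℝ)..t, chiSq1PDF s * ((1 / α) * chiSq1PDF ((t - s) / α))

/-- The Counterbalance estimator
`T^cb(θ, (x₁, x₂)) = θ √((‖AᵀAx₁‖/‖Ax₁‖)² + ‖Ax₂‖²)`. -/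
noncomputable def counterbalance {m n : ℕ} (A : Matrix (Fin m) (Fin n) ℝ) (θ : ℝ)
    (x₁ x₂ : EuclideanSpace ℝ (Fin n)) : ℝ :=
  θ * Real.sqrt ((‖Matrix.toEuclideanLin Aᵀ (Matrix.toEuclideanLin A x₁)‖ /
      ‖Matrix.toEuclideanLin A x₁‖) ^ 2 + ‖Matrix.toEuclideanLin A x₂‖ ^ 2)


open scoped ENNReal

section AuxProofs

lemma lintegral_pi_prod : ∀ {n : ℕ} (g : Fin n → ℝ → ℝ≥0∞), (∀ i, Measurable (g i)) →
    ∫⁻ y, ∏ i, g i (y i) ∂(Measure.pi fun _ : Fin n => (volume : Measure ℝ))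
      = ∏ i, ∫⁻ t, g i t := by
  intro n
  induction n with
  | zero => intro g hg; simp [Measure.pi_of_empty]
  | succ n ih =>
    intro g hg
    have hmp := (measurePreserving_piFinSuccAbove (fun _ : Fin (n+1) => (volume : Measure ℝ)) 0).symm
    have hmeas : Measurable fun y : Fin (n+1) → ℝ => ∏ i, g i (y i) :=
      Finset.measurable_prod _ fun i _ => (hg i).comp (measurable_pi_apply i)
    rw [← hmp.lintegral_comp hmeas]
    have heq : ∀ z : ℝ × (Fin n → ℝ),
        (∏ i, g i (((MeasurableEquiv.piFinSuccAbove (fun _ => ℝ) 0).symm z) i))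
          = g 0 z.1 * ∏ i : Fin n, g i.succ (z.2 i) := by
      intro z
      rw [Fin.prod_univ_succ]
      simp [MeasurableEquiv.piFinSuccAbove_symm_apply, Fin.zero_succAbove]
    simp_rw [heq]
    rw [lintegral_prod_mul (f := fun t => g 0 t)
      (g := fun y : Fin n → ℝ => ∏ i : Fin n, g i.succ (y i)) (hg 0).aemeasurable
      (Finset.measurable_prod _ fun i _ => (hg i.succ).comp (measurable_pi_apply i)).aemeasurable,
      ih (fun i => g i.succ) (fun i => hg i.succ), Fin.prod_univ_succ]


lemma pi_gaussian_eq (n : ℕ) :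
    (Measure.pi fun _ : Fin n => gaussianReal 0 1)
      = (volume : Measure (Fin n → ℝ)).withDensity
          (fun y => ∏ i, gaussianPDF 0 1 (y i)) := by
  refine Measure.pi_eq fun s hs => ?_
  have hD : Measurable fun y : Fin n → ℝ => ∏ i, gaussianPDF 0 1 (y i) :=
    Finset.measurable_prod _ fun i _ => (measurable_gaussianPDF 0 1).comp (measurable_pi_apply i)
  rw [withDensity_apply _ (MeasurableSet.univ_pi hs)]
  have : ∫⁻ y in Set.univ.pi s, (∏ i, gaussianPDF 0 1 (y i)) ∂(volume : Measure (Fin n → ℝ))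
      = ∫⁻ y, ∏ i, (s i).indicator (gaussianPDF 0 1) (y i) ∂(volume : Measure (Fin n → ℝ)) := by
    rw [← lintegral_indicator (MeasurableSet.univ_pi hs)]
    congr 1
    funext y
    by_cases hy : y ∈ Set.univ.pi s
    · rw [Set.indicator_of_mem hy]
      refine Finset.prod_congr rfl fun i _ => ?_
      rw [Set.indicator_of_mem (hy i (Set.mem_univ i))]
    · rw [Set.indicator_of_notMem hy]
      rw [Set.mem_univ_pi] at hy
      push_neg at hy
      obtain ⟨i, hi⟩ := hy
      rw [eq_comm, Finset.prod_eq_zero (Finset.mem_univ i)]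
      rw [Set.indicator_of_notMem hi]
  rw [this, volume_pi, lintegral_pi_prod _ (fun i => (measurable_gaussianPDF 0 1).indicator (hs i))]
  refine Finset.prod_congr rfl fun i _ => ?_
  rw [lintegral_indicator (hs i), gaussianReal_of_var_ne_zero 0 one_ne_zero,
    withDensity_apply _ (hs i)]

lemma stdGaussian_eq_withDensity (n : ℕ) :
    stdGaussian n = (volume : Measure (EuclideanSpace ℝ (Fin n))).withDensity
      (fun x => ∏ i, gaussianPDF 0 1 (x i)) := by
  have hD : Measurable fun y : Fin n → ℝ => ∏ i, gaussianPDF 0 1 (y i) :=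
    Finset.measurable_prod _ fun i _ => (measurable_gaussianPDF 0 1).comp (measurable_pi_apply i)
  rw [_root_.stdGaussian, pi_gaussian_eq]
  ext S hS
  rw [Measure.map_apply (MeasurableEquiv.measurable _) hS,
    withDensity_apply _ ((MeasurableEquiv.measurable _) hS),
    withDensity_apply _ hS]
  have hvol : (volume : Measure (EuclideanSpace ℝ (Fin n)))
      = (volume : Measure (Fin n → ℝ)).map (MeasurableEquiv.toLp 2 (Fin n → ℝ)) :=
    ((EuclideanSpace.volume_preserving_symm_measurableEquiv_toLp (Fin n)).symm _).map_eq.symm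
  have hg : Measurable fun x : EuclideanSpace ℝ (Fin n) => ∏ i, gaussianPDF 0 1 (x i) :=
    hD.comp ((MeasurableEquiv.toLp 2 (Fin n → ℝ)).symm).measurable
  rw [hvol, Measure.restrict_map (MeasurableEquiv.measurable _) hS,
    lintegral_map hg (MeasurableEquiv.measurable _)]
  rfl


lemma prod_gaussianPDF_eq {n : ℕ} (x : EuclideanSpace ℝ (Fin n)) :
    (∏ i, gaussianPDF 0 1 (x i))
      = ENNReal.ofReal ((Real.sqrt (2 * π))⁻¹ ^ n * Real.exp (-‖x‖ ^ 2 / 2)) := by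
  have h1 : ∀ t : ℝ, gaussianPDFReal 0 1 t = (Real.sqrt (2 * π))⁻¹ * Real.exp (-t ^ 2 / 2) := by
    intro t
    simp [gaussianPDFReal, NNReal.coe_one]
  have hnn : ∀ t : ℝ, 0 ≤ gaussianPDFReal 0 1 t := fun t => gaussianPDFReal_nonneg 0 1 t
  simp_rw [gaussianPDF]
  rw [← ENNReal.ofReal_prod_of_nonneg (fun i _ => hnn (x i))]
  congr 1
  simp_rw [h1]
  rw [Finset.prod_mul_distrib, Finset.prod_const, ← Real.exp_sum, Finset.card_univ,
    Fintype.card_fin]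
  congr 1
  have : ‖x‖ ^ 2 = ∑ i, x i ^ 2 := by
    rw [EuclideanSpace.norm_eq, Real.sq_sqrt (Finset.sum_nonneg fun i _ => sq_nonneg _)]
    simp [sq_abs]
  rw [this, ← Finset.sum_div, ← Finset.sum_neg_distrib]

lemma lintegral_gauss1d (c : ℝ) (hc : 0 ≤ c) :
    ∫⁻ t : ℝ, gaussianPDF 0 1 t * ENNReal.ofReal (Real.exp (-(c * t ^ 2)))
      = ENNReal.ofReal ((Real.sqrt (1 + 2 * c))⁻¹) := by
  have h1 : ∀ t : ℝ, gaussianPDFReal 0 1 t = (Real.sqrt (2 * π))⁻¹ * Real.exp (-t ^ 2 / 2) := by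
    intro t
    simp [gaussianPDFReal, NNReal.coe_one]
  have hcomb : ∀ t : ℝ,
      gaussianPDF 0 1 t * ENNReal.ofReal (Real.exp (-(c * t ^ 2)))
        = ENNReal.ofReal ((Real.sqrt (2 * π))⁻¹ * Real.exp (-(c + 1/2) * t ^ 2)) := by
    intro t
    rw [gaussianPDF, ← ENNReal.ofReal_mul (gaussianPDFReal_nonneg 0 1 t), h1, mul_assoc,
      ← Real.exp_add]
    ring_nf
  simp_rw [hcomb]
  have hpos : (0:ℝ) < c + 1/2 := by linarith
  have hint : Integrable (fun t : ℝ => Real.exp (-(c + 1/2) * t ^ 2)) := by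
    simpa using integrable_exp_neg_mul_sq hpos
  rw [← ofReal_integral_eq_lintegral_ofReal (hint.const_mul _)
    (Filter.Eventually.of_forall fun t => by positivity)]
  congr 1
  rw [integral_const_mul, integral_gaussian]
  have h2 : Real.sqrt (2 * π) = Real.sqrt 2 * Real.sqrt π := Real.sqrt_mul (by norm_num) π
  have h3 : Real.sqrt (π / (c + 1/2)) = Real.sqrt π / Real.sqrt (c + 1/2) :=
    Real.sqrt_div pi_nonneg _
  have h4 : Real.sqrt (1 + 2 * c) = Real.sqrt 2 * Real.sqrt (c + 1/2) := by
    rw [← Real.sqrt_mul (by norm_num : (0:ℝ) ≤ 2)]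
    congr 1
    ring
  have hπ : (0:ℝ) < Real.sqrt π := Real.sqrt_pos.mpr pi_pos
  have h5 : (0:ℝ) < Real.sqrt (c + 1/2) := Real.sqrt_pos.mpr hpos
  have h6 : (0:ℝ) < Real.sqrt 2 := by positivity
  rw [h2, h3, h4]
  field_simp


lemma lintegral_exp_quadratic {n : ℕ}
    (b : OrthonormalBasis (Fin n) ℝ (EuclideanSpace ℝ (Fin n)))
    (c : Fin n → ℝ) (hc : ∀ i, 0 ≤ c i) :
    ∫⁻ x, ENNReal.ofReal (Real.exp (-(∑ i, c i * (b.repr x i) ^ 2))) ∂(stdGaussian n)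
      = ∏ i, ENNReal.ofReal ((Real.sqrt (1 + 2 * c i))⁻¹) := by
  classical
  set e := (MeasurableEquiv.toLp 2 (Fin n → ℝ)).symm
  have hrep : ∀ i, Measurable fun x : EuclideanSpace ℝ (Fin n) => b.repr x i := fun i =>
    (measurable_pi_apply i).comp (e.measurable.comp b.repr.continuous.measurable)
  have hD : Measurable fun x : EuclideanSpace ℝ (Fin n) => ∏ i, gaussianPDF 0 1 (x i) :=
    Finset.measurable_prod _ fun i _ =>
      (measurable_gaussianPDF 0 1).comp ((measurable_pi_apply i).comp e.measurable)
  have hF : Measurable fun x : EuclideanSpace ℝ (Fin n) =>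
      ENNReal.ofReal (Real.exp (-(∑ i, c i * (b.repr x i) ^ 2))) := by
    refine ENNReal.measurable_ofReal.comp (Real.measurable_exp.comp ?_)
    exact (Finset.measurable_sum _ fun i _ => ((hrep i).pow_const 2).const_mul (c i)).neg
  rw [stdGaussian_eq_withDensity, lintegral_withDensity_eq_lintegral_mul _ hD hF]
  have hH : Measurable fun y : EuclideanSpace ℝ (Fin n) =>
      ENNReal.ofReal ((Real.sqrt (2 * π))⁻¹ ^ n * Real.exp (-‖y‖ ^ 2 / 2)) *
        ENNReal.ofReal (Real.exp (-(∑ i, c i * (y i) ^ 2))) := by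
    refine Measurable.fun_mul ?_ ?_
    · exact ENNReal.measurable_ofReal.comp
        ((measurable_const.mul (Real.measurable_exp.comp
          (((measurable_norm.pow_const 2).neg).div_const 2))))
    · refine ENNReal.measurable_ofReal.comp (Real.measurable_exp.comp ?_)
      exact (Finset.measurable_sum _ fun i _ =>
        ((((measurable_pi_apply i).comp e.measurable).pow_const 2).const_mul (c i))).neg
  have step1 : ∫⁻ a, ((fun x : EuclideanSpace ℝ (Fin n) => ∏ i, gaussianPDF 0 1 (x i)) * fun x =>
      ENNReal.ofReal (Real.exp (-(∑ i, c i * (b.repr x i) ^ 2)))) a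
        ∂(volume : Measure (EuclideanSpace ℝ (Fin n)))
      = ∫⁻ a, (fun y : EuclideanSpace ℝ (Fin n) =>
          ENNReal.ofReal ((Real.sqrt (2 * π))⁻¹ ^ n * Real.exp (-‖y‖ ^ 2 / 2)) *
            ENNReal.ofReal (Real.exp (-(∑ i, c i * (y i) ^ 2)))) (b.repr a)
        ∂(volume : Measure (EuclideanSpace ℝ (Fin n)))  := by
    congr 1
    funext a
    simp only [Pi.mul_apply]
    rw [prod_gaussianPDF_eq, b.repr.norm_map]
  rw [step1, b.measurePreserving_repr.lintegral_comp hH]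
  have step2 : ∀ y : EuclideanSpace ℝ (Fin n),
      ENNReal.ofReal ((Real.sqrt (2 * π))⁻¹ ^ n * Real.exp (-‖y‖ ^ 2 / 2)) *
        ENNReal.ofReal (Real.exp (-(∑ i, c i * (y i) ^ 2)))
      = ∏ i, (gaussianPDF 0 1 (y i) * ENNReal.ofReal (Real.exp (-(c i * (y i) ^ 2)))) := by
    intro y
    rw [← prod_gaussianPDF_eq]
    have : ENNReal.ofReal (Real.exp (-(∑ i, c i * (y i) ^ 2)))
        = ∏ i, ENNReal.ofReal (Real.exp (-(c i * (y i) ^ 2))) := by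
      rw [← ENNReal.ofReal_prod_of_nonneg (fun i _ => (Real.exp_pos _).le), ← Real.exp_sum]
      congr 1
      rw [← Finset.sum_neg_distrib]
    rw [this, Finset.prod_mul_distrib]
  simp_rw [step2]
  have hmpe := (EuclideanSpace.volume_preserving_symm_measurableEquiv_toLp (Fin n)).symm
  have hg : ∀ i : Fin n, Measurable fun t : ℝ =>
      gaussianPDF 0 1 t * ENNReal.ofReal (Real.exp (-(c i * t ^ 2))) := fun i =>
    (measurable_gaussianPDF 0 1).mul (ENNReal.measurable_ofReal.comp
      (Real.measurable_exp.comp (((measurable_id.pow_const 2).const_mul (c i)).neg)))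
  have hKm : Measurable fun y : EuclideanSpace ℝ (Fin n) =>
      ∏ i, (gaussianPDF 0 1 (y i) * ENNReal.ofReal (Real.exp (-(c i * (y i) ^ 2)))) :=
    Finset.measurable_prod _ fun i _ => (hg i).comp ((measurable_pi_apply i).comp e.measurable)
  rw [← hmpe.lintegral_comp hKm]
  have : ∫⁻ y, (fun x : EuclideanSpace ℝ (Fin n) =>
        ∏ i, (gaussianPDF 0 1 (x i) * ENNReal.ofReal (Real.exp (-(c i * (x i) ^ 2)))))
          (e.symm y) ∂(volume : Measure (Fin n → ℝ))
      = ∫⁻ y, ∏ i, (gaussianPDF 0 1 (y i) * ENNReal.ofReal (Real.exp (-(c i * (y i) ^ 2))))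
          ∂(Measure.pi fun _ : Fin n => (volume : Measure ℝ)) := by
    rw [← volume_pi]
    rfl
  rw [this, lintegral_pi_prod _ hg]
  exact Finset.prod_congr rfl fun i _ => lintegral_gauss1d (c i) (hc i)


section LinAlg
variable {m n : ℕ} (A : Matrix (Fin m) (Fin n) ℝ)

lemma norm_toEuclideanLin_sq (x : EuclideanSpace ℝ (Fin n)) :
    ‖Matrix.toEuclideanLin A x‖ ^ 2
      = ((WithLp.equiv 2 _) x) ⬝ᵥ ((Aᴴ * A) *ᵥ ((WithLp.equiv 2 _) x)) := by
  rw [← real_inner_self_eq_norm_sq]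
  rw [Matrix.toEuclideanLin_apply]
  rw [PiLp.inner_apply]
  have : ∀ i, inner ℝ ((WithLp.toLp 2 (A *ᵥ x.ofLp)) i)
      ((WithLp.toLp 2 (A *ᵥ x.ofLp)) i)
      = (A *ᵥ x.ofLp) i * (A *ᵥ x.ofLp) i := fun i => by simp [sq]
  simp_rw [this]
  rw [conjTranspose_eq_transpose_of_trivial, ← Matrix.mulVec_mulVec,
    Matrix.dotProduct_mulVec, Matrix.vecMul_transpose]
  rfl

lemma matrixSpectralNorm_pos (hA : A ≠ 0) : 0 < matrixSpectralNorm A := by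
  rw [matrixSpectralNorm, norm_pos_iff]
  intro h
  apply hA
  have : Matrix.toEuclideanLin A = 0 := by
    apply LinearMap.ext
    intro v
    have hv := ContinuousLinearMap.ext_iff.mp h v
    simpa using hv
  have h2 := congrArg (Matrix.toEuclideanLin (𝕜 := ℝ) (m := Fin m) (n := Fin n)).symm this
  simpa using h2

lemma norm_apply_le (x : EuclideanSpace ℝ (Fin n)) :
    ‖Matrix.toEuclideanLin A x‖ ≤ matrixSpectralNorm A * ‖x‖ := by
  have := (LinearMap.toContinuousLinearMap (Matrix.toEuclideanLin A)).le_opNorm x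
  rwa [LinearMap.coe_toContinuousLinearMap'] at this

end LinAlg

section Eigen
variable {m n : ℕ} (A : Matrix (Fin m) (Fin n) ℝ)

lemma norm_sq_inner (x : EuclideanSpace ℝ (Fin n)) :
    ‖Matrix.toEuclideanLin A x‖ ^ 2
      = (inner ℝ x (Matrix.toEuclideanLin (Aᴴ * A) x) : ℝ) := by
  rw [norm_toEuclideanLin_sq, PiLp.inner_apply]
  simp [dotProduct, mul_comm]

lemma eigen_apply (i : Fin n) :
    Matrix.toEuclideanLin (Aᴴ * A) ((isHermitian_conjTranspose_mul_self A).eigenvectorBasis i)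
      = (isHermitian_conjTranspose_mul_self A).eigenvalues i
          • (isHermitian_conjTranspose_mul_self A).eigenvectorBasis i := by
  rw [Matrix.toEuclideanLin_apply, (isHermitian_conjTranspose_mul_self A).mulVec_eigenvectorBasis]
  rfl

lemma eigen_expansion (x : EuclideanSpace ℝ (Fin n)) :
    ‖Matrix.toEuclideanLin A x‖ ^ 2
      = ∑ i, (isHermitian_conjTranspose_mul_self A).eigenvalues i
          * ((isHermitian_conjTranspose_mul_self A).eigenvectorBasis.repr x i) ^ 2 := by
  set hM := isHermitian_conjTranspose_mul_self A
  set b := hM.eigenvectorBasis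
  set d := hM.eigenvalues
  rw [norm_sq_inner]
  have hTx : Matrix.toEuclideanLin (Aᴴ * A) x
      = ∑ i, (b.repr x i) • (d i • b i) := by
    conv_lhs => rw [← b.sum_repr x]
    rw [map_sum]
    exact Finset.sum_congr rfl fun i _ => by rw [LinearMap.map_smul, eigen_apply]
  rw [hTx, inner_sum]
  simp_rw [real_inner_smul_right]
  refine Finset.sum_congr rfl fun i _ => ?_
  have : (inner ℝ x (b i) : ℝ) = b.repr x i := by
    rw [real_inner_comm, ← b.repr_apply_apply]
  rw [this]
  ring

lemma eigenvalue_eq_norm_sq (i : Fin n) :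
    (isHermitian_conjTranspose_mul_self A).eigenvalues i
      = ‖Matrix.toEuclideanLin A ((isHermitian_conjTranspose_mul_self A).eigenvectorBasis i)‖ ^ 2 := by
  rw [eigen_expansion]
  set b := (isHermitian_conjTranspose_mul_self A).eigenvectorBasis
  simp [OrthonormalBasis.repr_self, EuclideanSpace.single_apply]

end Eigen

section EigenBounds
variable {m n : ℕ} (A : Matrix (Fin m) (Fin n) ℝ)

lemma eigenvalues_nonneg' (i : Fin n) :
    0 ≤ (isHermitian_conjTranspose_mul_self A).eigenvalues i := by
  rw [eigenvalue_eq_norm_sq]; positivity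

lemma eigenvalues_le_sq (i : Fin n) :
    (isHermitian_conjTranspose_mul_self A).eigenvalues i ≤ matrixSpectralNorm A ^ 2 := by
  rw [eigenvalue_eq_norm_sq]
  have h1 := norm_apply_le A ((isHermitian_conjTranspose_mul_self A).eigenvectorBasis i)
  have h2 : ‖(isHermitian_conjTranspose_mul_self A).eigenvectorBasis i‖ = 1 :=
    (isHermitian_conjTranspose_mul_self A).eigenvectorBasis.orthonormal.1 i
  rw [h2, mul_one] at h1
  calc ‖Matrix.toEuclideanLin A ((isHermitian_conjTranspose_mul_self A).eigenvectorBasis i)‖ ^ 2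
      ≤ matrixSpectralNorm A ^ 2 := by
        have h0 : (0:ℝ) ≤ matrixSpectralNorm A := norm_nonneg _
        nlinarith [norm_nonneg (Matrix.toEuclideanLin A
          ((isHermitian_conjTranspose_mul_self A).eigenvectorBasis i))]

lemma norm_basisFun_image_sq (j : Fin n) :
    ‖Matrix.toEuclideanLin A (EuclideanSpace.basisFun (Fin n) ℝ j)‖ ^ 2
      = ∑ i, (A i j) ^ 2 := by
  rw [Matrix.toEuclideanLin_apply]
  rw [EuclideanSpace.norm_eq, Real.sq_sqrt (Finset.sum_nonneg fun i _ => by positivity)]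
  have : ((EuclideanSpace.basisFun (Fin n) ℝ) j).ofLp
      = Pi.single j 1 := by
    funext k
    show (EuclideanSpace.basisFun (Fin n) ℝ) j k = _
    rw [EuclideanSpace.basisFun_apply]
    simp [EuclideanSpace.single_apply, Pi.single_apply]
  rw [this, Matrix.mulVec_single]
  refine Finset.sum_congr rfl fun i _ => ?_
  simp [sq_abs]

lemma sum_eigenvalues_eq_frobenius :
    ∑ i, (isHermitian_conjTranspose_mul_self A).eigenvalues i = frobeniusNorm A ^ 2 := by
  set b := (isHermitian_conjTranspose_mul_self A).eigenvectorBasis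
  set d := (isHermitian_conjTranspose_mul_self A).eigenvalues
  have hfro : frobeniusNorm A ^ 2 = ∑ j, ∑ i, (A i j) ^ 2 := by
    rw [frobeniusNorm, Real.sq_sqrt (Finset.sum_nonneg fun i _ =>
      Finset.sum_nonneg fun j _ => by positivity), Finset.sum_comm]
  rw [hfro]
  have key : ∀ j, ∑ i, (A i j) ^ 2
      = ∑ i, d i * (b.repr (EuclideanSpace.basisFun (Fin n) ℝ j) i) ^ 2 := by
    intro j
    rw [← norm_basisFun_image_sq, eigen_expansion]
  simp_rw [key]
  rw [Finset.sum_comm]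
  refine Finset.sum_congr rfl fun i _ => ?_
  rw [← Finset.mul_sum]
  have hcoord : ∀ j, b.repr (EuclideanSpace.basisFun (Fin n) ℝ j) i = b i j := by
    intro j
    rw [b.repr_apply_apply, real_inner_comm]
    have := (EuclideanSpace.basisFun (Fin n) ℝ).repr_apply_apply (b i) j
    rw [← this]
    rfl
  simp_rw [hcoord]
  have : ∑ j, (b i) j ^ 2 = ‖b i‖ ^ 2 := by
    rw [EuclideanSpace.norm_eq, Real.sq_sqrt (Finset.sum_nonneg fun j _ => by positivity)]
    exact Finset.sum_congr rfl fun j _ => by simp [sq_abs]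
  rw [this, b.orthonormal.1 i]
  simp

end EigenBounds


-- Bernoulli-type: κ^u ≤ 1 + (κ-1)u for u ∈ [0,1], κ > 0
lemma rpow_le_one_add_mul' {κ u : ℝ} (hκ : 0 < κ) (hu0 : 0 ≤ u) (hu1 : u ≤ 1) :
    κ ^ (u : ℝ) ≤ 1 + (κ - 1) * u := by
  have h := convexOn_exp.2 (Set.mem_univ (0:ℝ)) (Set.mem_univ (Real.log κ))
    (by linarith : (0:ℝ) ≤ 1 - u) hu0 (by ring)
  simp only [smul_eq_mul, mul_zero, zero_add, Real.exp_zero] at h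
  rw [Real.exp_log hκ] at h
  rw [Real.rpow_def_of_pos hκ]
  calc Real.exp (Real.log κ * u) = Real.exp (u * Real.log κ) := by rw [mul_comm]
    _ ≤ (1 - u) * 1 + u * κ := h
    _ = 1 + (κ - 1) * u := by ring

lemma main_real_bound {n : ℕ} (θ s : ℝ) (hθ : 1 ≤ θ) (hs : 0 < s)
    (d : Fin n → ℝ) (hd0 : ∀ i, 0 ≤ d i) (hds : ∀ i, d i ≤ s ^ 2)
    (hsum : 7 * s ^ 2 ≤ ∑ i, d i) :
    Real.exp 2 * ∏ i, (Real.sqrt (1 + 2 * ((2 * θ ^ 2 / s ^ 2) * d i)))⁻¹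
      ≤ (θ ^ 4)⁻¹ / 8 := by
  have hθ0 : (0:ℝ) < θ := by linarith
  set κ := 1 + 4 * θ ^ 2 with hκdef
  have hκ1 : (1:ℝ) ≤ κ := by nlinarith
  have hκ0 : (0:ℝ) < κ := by linarith
  -- step 1: each factor bound
  have hfac : ∀ i, (Real.sqrt (1 + 2 * ((2 * θ ^ 2 / s ^ 2) * d i)))⁻¹
      ≤ κ ^ (-(d i / s ^ 2) / 2 : ℝ) := by
    intro i
    have hu0 : 0 ≤ d i / s ^ 2 := div_nonneg (hd0 i) (by positivity)
    have hu1 : d i / s ^ 2 ≤ 1 := by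
      rw [div_le_one (by positivity)]; exact hds i
    have h1 : κ ^ (d i / s ^ 2 : ℝ) ≤ 1 + 2 * ((2 * θ ^ 2 / s ^ 2) * d i) := by
      have := rpow_le_one_add_mul' hκ0 hu0 hu1
      calc κ ^ (d i / s ^ 2 : ℝ) ≤ 1 + (κ - 1) * (d i / s ^ 2) := this
        _ = 1 + 2 * ((2 * θ ^ 2 / s ^ 2) * d i) := by
            rw [hκdef]; field_simp; ring
    have hpos : (0:ℝ) < κ ^ (d i / s ^ 2 : ℝ) := Real.rpow_pos_of_pos hκ0 _
    have h2 : Real.sqrt (κ ^ (d i / s ^ 2 : ℝ))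
        ≤ Real.sqrt (1 + 2 * ((2 * θ ^ 2 / s ^ 2) * d i)) := Real.sqrt_le_sqrt h1
    have h3 : (0:ℝ) < Real.sqrt (κ ^ (d i / s ^ 2 : ℝ)) := Real.sqrt_pos.mpr hpos
    have h4 := inv_anti₀ h3 h2
    refine h4.trans_eq ?_
    rw [Real.sqrt_eq_rpow, ← Real.rpow_mul hκ0.le, ← Real.rpow_neg hκ0.le]
    congr 1
    ring
  -- step 2: product bound
  have hprod : ∏ i, (Real.sqrt (1 + 2 * ((2 * θ ^ 2 / s ^ 2) * d i)))⁻¹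
      ≤ κ ^ (-(7:ℝ) / 2) := by
    calc ∏ i, (Real.sqrt (1 + 2 * ((2 * θ ^ 2 / s ^ 2) * d i)))⁻¹
        ≤ ∏ i, κ ^ (-(d i / s ^ 2) / 2 : ℝ) := by
          refine Finset.prod_le_prod (fun i _ => by positivity) fun i _ => hfac i
      _ = κ ^ (∑ i, (-(d i / s ^ 2) / 2) : ℝ) := by
          simp_rw [Real.rpow_def_of_pos hκ0, ← Real.exp_sum, ← Finset.mul_sum]
      _ ≤ κ ^ (-(7:ℝ) / 2) := by
          refine Real.rpow_le_rpow_of_exponent_le hκ1 ?_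
          have : (7:ℝ) ≤ (∑ i, d i) / s ^ 2 := by
            rw [le_div_iff₀ (by positivity)]; linarith
          have heq : ∑ i, (-(d i / s ^ 2) / 2) = -((∑ i, d i) / s ^ 2) / 2 := by
            simp_rw [neg_div]
            rw [Finset.sum_neg_distrib, ← Finset.sum_div, ← Finset.sum_div]
          rw [heq]
          linarith
  -- step 3: κ^(7/2) ≥ (2θ)^7
  have hκ7 : ((2 * θ) ^ 7 : ℝ) ≤ κ ^ ((7:ℝ) / 2) := by
    have h4θ : ((2 * θ) ^ 2 : ℝ) ≤ κ := by rw [hκdef]; nlinarith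
    calc ((2 * θ) ^ 7 : ℝ) = ((2 * θ) ^ 2) ^ ((7:ℝ)/2) := by
          rw [← Real.rpow_natCast (2 * θ) 7, ← Real.rpow_natCast (2*θ) 2,
            ← Real.rpow_mul (by positivity : (0:ℝ) ≤ 2*θ)]
          norm_num
      _ ≤ κ ^ ((7:ℝ)/2) := Real.rpow_le_rpow (by positivity) h4θ (by norm_num)
  have hκneg : κ ^ (-(7:ℝ)/2) ≤ ((2 * θ) ^ 7)⁻¹ := by
    rw [neg_div, Real.rpow_neg hκ0.le]
    exact inv_anti₀ (by positivity) hκ7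
  -- step 4: conclude
  have hexp : Real.exp 2 ≤ 16 := by
    rw [show (2:ℝ) = 1 + 1 by norm_num, Real.exp_add]
    nlinarith [Real.exp_one_lt_d9, Real.exp_pos 1]
  have hθpow : θ ^ 4 ≤ θ ^ 7 := pow_le_pow_right₀ hθ (by norm_num)
  calc Real.exp 2 * ∏ i, (Real.sqrt (1 + 2 * ((2 * θ ^ 2 / s ^ 2) * d i)))⁻¹
      ≤ Real.exp 2 * ((2 * θ) ^ 7)⁻¹ := by
        refine mul_le_mul_of_nonneg_left (hprod.trans hκneg) (Real.exp_pos 2).le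
    _ ≤ 16 * ((2 * θ) ^ 7)⁻¹ := by
        refine mul_le_mul_of_nonneg_right hexp (by positivity)
    _ ≤ (θ ^ 4)⁻¹ / 8 := by
        have hθ4 : (0:ℝ) < θ ^ 4 := by positivity
        rw [mul_pow, show ((2:ℝ)^7) = 128 by norm_num, div_eq_mul_inv, ← mul_inv]
        have he : (16:ℝ) * (128 * θ ^ 7)⁻¹ = (8 * θ ^ 7)⁻¹ := by
          rw [mul_inv, mul_inv, ← mul_assoc]
          norm_num
        rw [he]
        apply inv_anti₀ (by positivity)
        nlinarith [hθpow]

end AuxProofs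

/-- if `ρ = ‖A‖_F²/‖A‖² ≥ 7` and `X₁, X₂` are independent standard
Gaussian vectors, then for `θ ≥ 1`, `P(T^cb(θ,X) ≤ ‖A‖) ≤ θ⁻⁴/8`. -/
theorem counterbalance_underestimation_of_seven_le_effectiveRank
    {m n : ℕ} (A : Matrix (Fin m) (Fin n) ℝ) (hA : A ≠ 0)
    (hρ : 7 ≤ effectiveRank A)
    {Ω : Type*} [MeasureSpace Ω] [IsProbabilityMeasure (ℙ : Measure Ω)]
    (X₁ X₂ : Ω → EuclideanSpace ℝ (Fin n))
    (hX₁ : Measure.map X₁ ℙ = stdGaussian n)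
    (hX₂ : Measure.map X₂ ℙ = stdGaussian n)
    (hindep : IndepFun X₁ X₂ ℙ)
    (θ : ℝ) (hθ : 1 ≤ θ) :
    ℙ {ω | counterbalance A θ (X₁ ω) (X₂ ω) ≤ matrixSpectralNorm A} ≤
      ENNReal.ofReal ((θ ^ 4)⁻¹ / 8) := by
  classical
  set s := matrixSpectralNorm A with hsdef
  have hs : 0 < s := matrixSpectralNorm_pos A hA
  have hθ0 : (0:ℝ) < θ := by linarith
  set t := s ^ 2 / θ ^ 2 with htdef
  set lam := 2 * θ ^ 2 / s ^ 2 with hlamdef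
  have hlam0 : 0 ≤ lam := by positivity
  set b := (isHermitian_conjTranspose_mul_self A).eigenvectorBasis with hbdef
  set d := (isHermitian_conjTranspose_mul_self A).eigenvalues with hddef
  -- the target set on Gaussian space
  set S : Set (EuclideanSpace ℝ (Fin n)) :=
    {x | ‖Matrix.toEuclideanLin A x‖ ^ 2 ≤ t} with hSdef
  have hcont : Continuous fun x : EuclideanSpace ℝ (Fin n) =>
      ‖Matrix.toEuclideanLin A x‖ ^ 2 :=
    ((LinearMap.continuous_of_finiteDimensional _).norm).pow 2
  have hSm : MeasurableSet S := measurableSet_le hcont.measurable measurable_const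
  -- event inclusion
  have hsub : {ω | counterbalance A θ (X₁ ω) (X₂ ω) ≤ s} ⊆ (X₂ ⁻¹' S) := by
    intro ω hω
    simp only [Set.mem_setOf_eq] at hω
    simp only [Set.mem_preimage, hSdef, Set.mem_setOf_eq]
    set q := ‖Matrix.toEuclideanLin A (X₂ ω)‖ with hqdef
    set r := ‖Matrix.toEuclideanLin Aᵀ (Matrix.toEuclideanLin A (X₁ ω))‖ /
      ‖Matrix.toEuclideanLin A (X₁ ω)‖ with hrdef
    have h1 : θ * q ≤ s := by
      refine le_trans ?_ hω
      rw [counterbalance]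
      refine mul_le_mul_of_nonneg_left ?_ hθ0.le
      have hq2 : q ^ 2 ≤ r ^ 2 + q ^ 2 := by nlinarith [sq_nonneg r]
      have := Real.sqrt_le_sqrt hq2
      rwa [Real.sqrt_sq (norm_nonneg _)] at this
    have h2 : q ≤ s / θ := by
      rw [le_div_iff₀ hθ0]; linarith [h1]
    calc q ^ 2 ≤ (s / θ) ^ 2 := pow_le_pow_left₀ (norm_nonneg _) h2 2
      _ = t := by rw [htdef, div_pow]
  refine le_trans (measure_mono hsub) ?_
  -- transfer to stdGaussian
  have hne : stdGaussian n ≠ 0 := by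
    intro h0
    have h1 : stdGaussian n Set.univ = 0 := by rw [h0]; rfl
    rw [_root_.stdGaussian, Measure.map_apply (MeasurableEquiv.measurable _)
      MeasurableSet.univ] at h1
    simp [measure_univ] at h1
  have hX₂m : AEMeasurable X₂ ℙ := by
    by_contra hc
    rw [Measure.map, dif_neg] at hX₂
    · exact hne hX₂.symm
    · simpa using hc
  rw [← Measure.map_apply_of_aemeasurable hX₂m hSm, hX₂]
  -- Chernoff bound
  have hrep : ∀ i, Measurable fun x : EuclideanSpace ℝ (Fin n) => b.repr x i := fun i =>
    (measurable_pi_apply i).comp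
      (((MeasurableEquiv.toLp 2 (Fin n → ℝ)).symm).measurable.comp b.repr.continuous.measurable)
  have hF : Measurable fun x : EuclideanSpace ℝ (Fin n) =>
      ENNReal.ofReal (Real.exp (-(∑ i, (lam * d i) * (b.repr x i) ^ 2))) := by
    refine ENNReal.measurable_ofReal.comp (Real.measurable_exp.comp ?_)
    exact (Finset.measurable_sum _ fun i _ =>
      ((hrep i).pow_const 2).const_mul (lam * d i)).neg
  have hlamt : lam * t = 2 := by
    rw [hlamdef, htdef]; field_simp
  have hptwise : ∀ x, S.indicator (fun _ => (1:ℝ≥0∞)) x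
      ≤ ENNReal.ofReal (Real.exp (lam * t)) *
          ENNReal.ofReal (Real.exp (-(∑ i, (lam * d i) * (b.repr x i) ^ 2))) := by
    intro x
    have hsum_eq : ∑ i, (lam * d i) * (b.repr x i) ^ 2
        = lam * ‖Matrix.toEuclideanLin A x‖ ^ 2 := by
      rw [eigen_expansion A x, Finset.mul_sum]
      exact Finset.sum_congr rfl fun i _ => by ring
    rw [← ENNReal.ofReal_mul (Real.exp_pos _).le, ← Real.exp_add]
    by_cases hx : x ∈ S
    · rw [Set.indicator_of_mem hx]
      refine ENNReal.one_le_ofReal.mpr (Real.one_le_exp ?_)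
      have hxS : ‖Matrix.toEuclideanLin A x‖ ^ 2 ≤ t := hx
      rw [hsum_eq]
      nlinarith [mul_le_mul_of_nonneg_left hxS hlam0]
    · rw [Set.indicator_of_notMem hx]
      exact bot_le
  calc stdGaussian n S = ∫⁻ x, S.indicator (fun _ => (1:ℝ≥0∞)) x ∂(stdGaussian n) := by
        exact (lintegral_indicator_one hSm).symm
    _ ≤ ∫⁻ x, ENNReal.ofReal (Real.exp (lam * t)) *
          ENNReal.ofReal (Real.exp (-(∑ i, (lam * d i) * (b.repr x i) ^ 2)))
            ∂(stdGaussian n) := lintegral_mono hptwise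
    _ = ENNReal.ofReal (Real.exp (lam * t)) *
          ∫⁻ x, ENNReal.ofReal (Real.exp (-(∑ i, (lam * d i) * (b.repr x i) ^ 2)))
            ∂(stdGaussian n) := lintegral_const_mul _ hF
    _ = ENNReal.ofReal (Real.exp 2) *
          ∏ i, ENNReal.ofReal ((Real.sqrt (1 + 2 * (lam * d i)))⁻¹) := by
        rw [hlamt, lintegral_exp_quadratic b (fun i => lam * d i)
          (fun i => mul_nonneg hlam0 (eigenvalues_nonneg' A i))]
    _ = ENNReal.ofReal (Real.exp 2 * ∏ i, (Real.sqrt (1 + 2 * (lam * d i)))⁻¹) := by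
        rw [← ENNReal.ofReal_prod_of_nonneg (fun i _ => by positivity),
          ← ENNReal.ofReal_mul (Real.exp_pos _).le]
    _ ≤ ENNReal.ofReal ((θ ^ 4)⁻¹ / 8) := by
        refine ENNReal.ofReal_le_ofReal ?_
        refine main_real_bound θ s hθ hs d (eigenvalues_nonneg' A)
          (eigenvalues_le_sq A) ?_
        have h7 : 7 ≤ frobeniusNorm A ^ 2 / s ^ 2 := hρ
        rw [sum_eigenvalues_eq_frobenius A]
        have := (le_div_iff₀ (by positivity : (0:ℝ) < s ^ 2)).mp h7
        linarith
end

section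
/- Let A ∈ ℝ^{m×n} be a nonzero matrix and let X₁, X₂ be independent standard Gaussian vectors in ℝⁿ. Then for every θ > 0, the Dixon estimator T^d(θ,X) = θ · max(√(‖AᵀAX₁‖), ‖AX₂‖) satisfies P(T^d(θ,X) ≤ ‖A‖) ≤ (2/π) · θ⁻³. -/
open MeasureTheory ProbabilityTheory Real Matrix
open scoped NNReal ENNReal

lemma aux_pdf_eq (A B : ℝ) (hA : 0 < A) (hB : 0 < B) (z x : ℝ) :
    gaussianPDFReal 0 A.toNNReal x * gaussianPDFReal 0 B.toNNReal (z - x) =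
      ((√(2 * π * A))⁻¹ * (√(2 * π * B))⁻¹ * rexp (-z ^ 2 / (2 * (A + B)))) *
        rexp (-(((A + B) / (2 * A * B)) * (x - A * z / (A + B)) ^ 2)) := by
  have hπ := Real.pi_pos
  unfold gaussianPDFReal
  rw [Real.coe_toNNReal _ hA.le, Real.coe_toNNReal _ hB.le]
  simp only [sub_zero]
  have fold : ∀ u v : ℝ, (√(2 * π * A))⁻¹ * rexp u * ((√(2 * π * B))⁻¹ * rexp v) =
      (√(2 * π * A))⁻¹ * (√(2 * π * B))⁻¹ * rexp (u + v) := by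
    intro u v; rw [Real.exp_add]; ring
  rw [fold, mul_assoc _ (rexp _) (rexp _), ← Real.exp_add]
  congr 1
  congr 1
  field_simp
  ring


lemma gaussian_conv_pdf (A B : ℝ) (hA : 0 < A) (hB : 0 < B) (z : ℝ) :
    ∫ x : ℝ, gaussianPDFReal 0 A.toNNReal x * gaussianPDFReal 0 B.toNNReal (z - x) =
      gaussianPDFReal 0 (A + B).toNNReal z := by
  have hπ := Real.pi_pos
  have hAB : 0 < A + B := by linarith
  set c : ℝ := (A + B) / (2 * A * B) with hc_def
  have hc : 0 < c := by positivity
  set d : ℝ := A * z / (A + B) with hd_def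
  set K : ℝ := (√(2 * π * A))⁻¹ * (√(2 * π * B))⁻¹ * rexp (-z ^ 2 / (2 * (A + B))) with hK_def
  have h1 : ∀ x : ℝ, gaussianPDFReal 0 A.toNNReal x * gaussianPDFReal 0 B.toNNReal (z - x)
      = K * rexp (-(c * (x - d) ^ 2)) := fun x => aux_pdf_eq A B hA hB z x
  rw [integral_congr_ae (Filter.Eventually.of_forall h1), integral_const_mul]
  have h2 : ∫ x : ℝ, rexp (-(c * (x - d) ^ 2)) = √(π / c) := by
    rw [show (fun x : ℝ => rexp (-(c * (x - d) ^ 2))) = fun x => rexp (-c * (x - d) ^ 2) by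
      funext x; ring_nf]
    rw [integral_sub_right_eq_self (fun x : ℝ => rexp (-c * x ^ 2)) d]
    exact integral_gaussian c
  rw [h2]
  unfold gaussianPDFReal
  rw [Real.coe_toNNReal _ hAB.le]
  simp only [sub_zero]
  rw [hK_def]
  have e1 : (√(2 * π * A))⁻¹ = √(2 * π * A)⁻¹ := (Real.sqrt_inv _).symm
  have e2 : (√(2 * π * B))⁻¹ = √(2 * π * B)⁻¹ := (Real.sqrt_inv _).symm
  have e3 : (√(2 * π * (A + B)))⁻¹ = √(2 * π * (A + B))⁻¹ := (Real.sqrt_inv _).symm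
  rw [e1, e2, e3, mul_comm, ← mul_assoc, ← mul_assoc, ← Real.sqrt_mul (by positivity),
    ← Real.sqrt_mul (by positivity)]
  congr 1
  rw [hc_def]
  congr 1
  field_simp

lemma gaussian_conv_integrable (A B : ℝ) (hA : 0 < A) (hB : 0 < B) (z : ℝ) :
    Integrable (fun x : ℝ =>
      gaussianPDFReal 0 A.toNNReal x * gaussianPDFReal 0 B.toNNReal (z - x)) := by
  have hc : 0 < (A + B) / (2 * A * B) := by positivity
  have : Integrable (fun x : ℝ =>
      ((√(2 * π * A))⁻¹ * (√(2 * π * B))⁻¹ * rexp (-z ^ 2 / (2 * (A + B)))) *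
        rexp (-(((A + B) / (2 * A * B)) * (x - A * z / (A + B)) ^ 2))) := by
    apply Integrable.const_mul
    have h := (integrable_exp_neg_mul_sq hc).comp_sub_right (A * z / (A + B))
    convert h using 2 with x
    ring_nf
  exact this.congr (Filter.Eventually.of_forall fun x => (aux_pdf_eq A B hA hB z x).symm)

lemma gaussian_add (a b : ℝ≥0) :
    Measure.map (fun p : ℝ × ℝ => p.1 + p.2) ((gaussianReal 0 a).prod (gaussianReal 0 b)) =
      gaussianReal 0 (a + b) := by
  by_cases ha : a = 0
  · subst ha
    rw [gaussianReal_zero_var, Measure.dirac_prod, Measure.map_map (by fun_prop) (by fun_prop)]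
    simp only [Function.comp_def, zero_add]
    simp [Measure.map_id']
  by_cases hb : b = 0
  · subst hb
    rw [gaussianReal_zero_var, Measure.prod_dirac, Measure.map_map (by fun_prop) (by fun_prop)]
    simp only [Function.comp_def, add_zero]
    simp [Measure.map_id']
  have hA : 0 < (a : ℝ) := by positivity
  have hB : 0 < (b : ℝ) := by positivity
  have hab : a + b ≠ 0 := fun h => ha (by simpa using (add_eq_zero.mp h).1)
  ext s hs
  rw [Measure.map_apply (by fun_prop) hs, Measure.prod_apply (measurable_add hs)]
  have hb' : ∀ x : ℝ, gaussianReal 0 b (Prod.mk x ⁻¹' ((fun p : ℝ × ℝ => p.1 + p.2) ⁻¹' s)) =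
      ∫⁻ z in s, gaussianPDF 0 b (z - x) ∂volume := by
    intro x
    have hpre : Prod.mk x ⁻¹' ((fun p : ℝ × ℝ => p.1 + p.2) ⁻¹' s) = (fun y => x + y) ⁻¹' s := rfl
    rw [hpre, gaussianReal_of_var_ne_zero 0 hb,
      withDensity_apply _ ((measurable_const_add x) hs)]
    have hmp : MeasurePreserving (fun y : ℝ => x + y) volume volume :=
      measurePreserving_add_left volume x
    have := hmp.setLIntegral_comp_preimage hs
      (f := fun z => gaussianPDF 0 b (z - x))
      ((measurable_gaussianPDF 0 b).comp (measurable_id.sub measurable_const))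
    rw [← this]
    congr 1 with y
    simp
  simp_rw [hb']
  have hFm : Measurable fun x : ℝ => ∫⁻ z in s, gaussianPDF 0 b (z - x) ∂volume := by
    apply Measurable.lintegral_prod_right
    exact (measurable_gaussianPDF 0 b).comp (measurable_snd.sub measurable_fst)
  rw [gaussianReal_of_var_ne_zero 0 ha,
    lintegral_withDensity_eq_lintegral_mul volume (measurable_gaussianPDF 0 a) hFm]
  simp only [Pi.mul_apply]
  have hswap : ∫⁻ x, gaussianPDF 0 a x * ∫⁻ z in s, gaussianPDF 0 b (z - x) ∂volume ∂volume
      = ∫⁻ z in s, ∫⁻ x, gaussianPDF 0 a x * gaussianPDF 0 b (z - x) ∂volume ∂volume := by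
    have h1 : ∀ x : ℝ, gaussianPDF 0 a x * ∫⁻ z in s, gaussianPDF 0 b (z - x) ∂volume
        = ∫⁻ z in s, gaussianPDF 0 a x * gaussianPDF 0 b (z - x) ∂volume := fun x =>
      (lintegral_const_mul _ ((measurable_gaussianPDF 0 b).comp (measurable_id.sub
        measurable_const))).symm
    simp_rw [h1]
    exact lintegral_lintegral_swap (((measurable_gaussianPDF 0 a).comp measurable_fst).mul
      ((measurable_gaussianPDF 0 b).comp (measurable_snd.sub measurable_fst))).aemeasurable
  rw [hswap]
  have hkey : ∀ z : ℝ, ∫⁻ x, gaussianPDF 0 a x * gaussianPDF 0 b (z - x) ∂volume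
      = gaussianPDF 0 (a + b) z := by
    intro z
    simp_rw [gaussianPDF, ← ENNReal.ofReal_mul (gaussianPDFReal_nonneg 0 a _)]
    rw [← ofReal_integral_eq_lintegral_ofReal]
    · congr 1
      have h := gaussian_conv_pdf (a : ℝ) (b : ℝ) (by positivity) (by positivity) z
      rw [Real.toNNReal_coe, Real.toNNReal_coe] at h
      rw [h]
      congr 1
      rw [← NNReal.coe_add, Real.toNNReal_coe]
    · have h := gaussian_conv_integrable (a : ℝ) (b : ℝ) (by positivity) (by positivity) z
      rwa [Real.toNNReal_coe, Real.toNNReal_coe] at h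
    · exact Filter.Eventually.of_forall fun x =>
        mul_nonneg (gaussianPDFReal_nonneg 0 a x) (gaussianPDFReal_nonneg 0 b _)
  simp_rw [hkey]
  exact (gaussianReal_apply 0 hab s).symm


lemma pi_gauss_dot : ∀ (k : ℕ) (w : Fin k → ℝ),
    Measure.map (fun y : Fin k → ℝ => ∑ i, w i * y i)
      (Measure.pi fun _ : Fin k => gaussianReal 0 1) = gaussianReal 0 (∑ i, ‖w i‖₊ ^ 2) := by
  intro k
  induction k with
  | zero =>
    intro w
    have h0 : (fun y : Fin 0 → ℝ => ∑ i, w i * y i) = fun _ => (0 : ℝ) := by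
      funext y; simp
    rw [h0, Measure.map_const]
    simp [gaussianReal_zero_var]
  | succ k ih =>
    intro w
    have hmp := measurePreserving_piFinSuccAbove (fun _ : Fin (k + 1) => gaussianReal 0 1) 0
    set e := MeasurableEquiv.piFinSuccAbove (fun _ : Fin (k + 1) => ℝ) 0
    have hcomp : (fun y : Fin (k + 1) → ℝ => ∑ i, w i * y i) =
        (fun p : ℝ × (Fin k → ℝ) => w 0 * p.1 + ∑ j, w (Fin.succ j) * p.2 j) ∘ e := by
      funext y
      simp only [Function.comp_apply]
      rw [Fin.sum_univ_succ]
      refine congrArg₂ (· + ·) rfl ?_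
      apply Finset.sum_congr rfl
      intro j _
      simp [e, MeasurableEquiv.piFinSuccAbove, Fin.succAbove_zero, Fin.tail]
    rw [hcomp, ← Measure.map_map (by fun_prop) e.measurable, hmp.map_eq]
    have hsplit : (fun p : ℝ × (Fin k → ℝ) => w 0 * p.1 + ∑ j, w (Fin.succ j) * p.2 j) =
        (fun q : ℝ × ℝ => q.1 + q.2) ∘
          (Prod.map (fun t : ℝ => w 0 * t) (fun z : Fin k → ℝ => ∑ j, w (Fin.succ j) * z j)) := by
      funext p; rfl
    rw [hsplit, ← Measure.map_map (by fun_prop) (by fun_prop),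
      ← Measure.map_prod_map _ _ (by fun_prop) (by fun_prop)]
    have h1 : Measure.map (fun t : ℝ => w 0 * t) (gaussianReal 0 1) =
        gaussianReal 0 (‖w 0‖₊ ^ 2) := by
      rw [show (fun t : ℝ => w 0 * t) = (fun t : ℝ => w 0 * t) from rfl]
      rw [gaussianReal_map_const_mul (w 0)]
      congr
      · ring
      · ext
        simp [NNReal.coe_pow, sq_abs]
    have h2 := ih (fun j => w (Fin.succ j))
    rw [h1, h2, gaussian_add]
    congr 1
    rw [Fin.sum_univ_succ]

instance (n : ℕ) : IsProbabilityMeasure (stdGaussian n) := by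
  unfold _root_.stdGaussian
  exact MeasureTheory.Measure.isProbabilityMeasure_map (MeasurableEquiv.measurable _).aemeasurable

lemma stdGaussian_inner_map (n : ℕ) (v : EuclideanSpace ℝ (Fin n)) (hv : ‖v‖ = 1) :
    Measure.map (fun x : EuclideanSpace ℝ (Fin n) => (inner ℝ v x : ℝ)) (stdGaussian n) =
      gaussianReal 0 1 := by
  unfold _root_.stdGaussian
  have hme : Measurable fun x : EuclideanSpace ℝ (Fin n) => (inner ℝ v x : ℝ) :=
    Continuous.measurable (continuous_const.inner continuous_id)
  rw [Measure.map_map hme (MeasurableEquiv.measurable _)]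
  have hfun : ((fun x : EuclideanSpace ℝ (Fin n) => (inner ℝ v x : ℝ)) ∘
      (MeasurableEquiv.toLp 2 (Fin n → ℝ))) = fun y : Fin n → ℝ => ∑ i, v i * y i := by
    funext y
    simp [PiLp.inner_apply, RCLike.inner_apply, MeasurableEquiv.toLp]
    exact Finset.sum_congr rfl fun i _ => mul_comm _ _
  rw [hfun, pi_gauss_dot]
  congr 1
  have hnorm : ∑ i, (v i) ^ 2 = 1 := by
    have := EuclideanSpace.norm_eq v
    rw [hv] at this
    have h2 : (1 : ℝ) = √(∑ i, ‖v i‖ ^ 2) := this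
    have h3 : ∑ i, ‖v i‖ ^ 2 = ∑ i, (v i) ^ 2 := by
      apply Finset.sum_congr rfl; intro i _; rw [Real.norm_eq_abs, sq_abs]
    rw [h3] at h2
    nlinarith [Real.sq_sqrt (by positivity : (0:ℝ) ≤ ∑ i, (v i) ^ 2)]
  ext
  rw [NNReal.coe_sum]
  simp only [NNReal.coe_pow, coe_nnnorm, Real.norm_eq_abs, sq_abs]
  rw [hnorm, NNReal.coe_one]

lemma gaussian_small_ball (a : ℝ) (ha : 0 ≤ a) :
    gaussianReal 0 1 {x : ℝ | |x| ≤ a} ≤ ENNReal.ofReal ((√(2 * π))⁻¹ * (2 * a)) := by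
  have hset : {x : ℝ | |x| ≤ a} = Set.Icc (-a) a := by ext x; simp [abs_le]
  rw [gaussianReal_apply 0 one_ne_zero, hset]
  calc ∫⁻ x in Set.Icc (-a) a, gaussianPDF 0 1 x
      ≤ ∫⁻ _ in Set.Icc (-a) a, ENNReal.ofReal ((√(2 * π))⁻¹) := by
        apply lintegral_mono
        intro x
        apply ENNReal.ofReal_le_ofReal
        unfold gaussianPDFReal
        simp only [NNReal.coe_one, mul_one, sub_zero]
        calc (√(2 * π))⁻¹ * rexp (-x ^ 2 / 2) ≤ (√(2 * π))⁻¹ * 1 := by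
              apply mul_le_mul_of_nonneg_left _ (by positivity)
              rw [← Real.exp_zero]
              apply Real.exp_le_exp.mpr
              nlinarith [sq_nonneg x]
          _ = (√(2 * π))⁻¹ := mul_one _
    _ = ENNReal.ofReal ((√(2 * π))⁻¹) * volume (Set.Icc (-a) a) := setLIntegral_const _ _
    _ ≤ ENNReal.ofReal ((√(2 * π))⁻¹ * (2 * a)) := by
        rw [Real.volume_Icc, ENNReal.ofReal_mul (by positivity)]
        apply mul_le_mul_right (ENNReal.ofReal_le_ofReal (by linarith))

lemma exists_good_vector {m n : ℕ} (A : Matrix (Fin m) (Fin n) ℝ) (hA : A ≠ 0) :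
    ∃ v : EuclideanSpace ℝ (Fin n), ‖v‖ = 1 ∧
      (∀ x, matrixSpectralNorm A ^ 2 * |(inner ℝ v x : ℝ)| ≤
        ‖Matrix.toEuclideanLin Aᵀ (Matrix.toEuclideanLin A x)‖) ∧
      (∀ x, matrixSpectralNorm A * |(inner ℝ v x : ℝ)| ≤ ‖Matrix.toEuclideanLin A x‖) := by
  have hn : n ≠ 0 := by
    rintro rfl
    exact hA (by ext i j; exact j.elim0)
  haveI : Nonempty (Fin n) := ⟨⟨0, Nat.pos_of_ne_zero hn⟩⟩
  haveI : Nontrivial (EuclideanSpace ℝ (Fin n)) := inferInstance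
  set S : EuclideanSpace ℝ (Fin n) →L[ℝ] EuclideanSpace ℝ (Fin m) :=
    LinearMap.toContinuousLinearMap (Matrix.toEuclideanLin A) with hS_def
  have hSA : ∀ x, S x = Matrix.toEuclideanLin A x := fun x => rfl
  have hSne : S ≠ 0 := by
    intro h
    apply hA
    have h' : Matrix.toEuclideanLin A = 0 :=
      LinearMap.toContinuousLinearMap.injective (by rw [← hS_def, h]; rfl)
    simpa using Matrix.toEuclideanLin.injective (by rw [h']; simp)
  have hSpos : 0 < ‖S‖ := norm_pos_iff.mpr hSne
  -- maximize ‖S x‖ on the unit sphere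
  obtain ⟨x₀, hx₀s, hmax⟩ := (isCompact_sphere (0 : EuclideanSpace ℝ (Fin n)) 1).exists_isMaxOn
    (NormedSpace.sphere_nonempty.mpr zero_le_one) (S.continuous.norm.continuousOn)
  have hx₀norm : ‖x₀‖ = 1 := mem_sphere_zero_iff_norm.mp hx₀s
  have hx₀ne : x₀ ≠ 0 := fun h => by simp [h] at hx₀norm
  set T : EuclideanSpace ℝ (Fin n) →L[ℝ] EuclideanSpace ℝ (Fin n) :=
    (ContinuousLinearMap.adjoint S).comp S with hT_def
  have hTsa : IsSelfAdjoint T := by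
    rw [ContinuousLinearMap.isSelfAdjoint_iff_isSymmetric]
    intro x y
    show (inner ℝ ((ContinuousLinearMap.adjoint S) (S x)) y : ℝ) =
      inner ℝ x ((ContinuousLinearMap.adjoint S) (S y))
    rw [ContinuousLinearMap.adjoint_inner_left, ContinuousLinearMap.adjoint_inner_right]
  have hre : ∀ x, T.reApplyInnerSelf x = ‖S x‖ ^ 2 := by
    intro x
    have hx : (inner ℝ (T x) x : ℝ) = ‖S x‖ ^ 2 := by
      show (inner ℝ ((ContinuousLinearMap.adjoint S) (S x)) x : ℝ) = _
      rw [ContinuousLinearMap.adjoint_inner_left]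
      exact real_inner_self_eq_norm_sq _
    simpa [ContinuousLinearMap.reApplyInnerSelf_apply] using hx
  have hmax' : IsMaxOn T.reApplyInnerSelf (Metric.sphere (0 : EuclideanSpace ℝ (Fin n)) ‖x₀‖) x₀ := by
    rw [hx₀norm]
    intro y hy
    simp only [Set.mem_setOf_eq, hre]
    exact pow_le_pow_left₀ (norm_nonneg _) (hmax hy) 2
  have heig := hTsa.eq_smul_self_of_isLocalExtrOn (Or.inr hmax'.localize)
  set lam : ℝ := T.rayleighQuotient x₀ with hlam_def
  have hlam_eq : lam = ‖S x₀‖ ^ 2 := by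
    rw [hlam_def, ContinuousLinearMap.rayleighQuotient, hre, hx₀norm]
    norm_num
  have heig' : T x₀ = lam • x₀ := by
    rw [heig]; norm_num
  have hSle : ‖S‖ ≤ ‖S x₀‖ := by
    apply ContinuousLinearMap.opNorm_le_bound _ (norm_nonneg _)
    intro x
    rcases eq_or_ne x 0 with rfl | hx
    · simp
    · have hxn : ‖x‖ ≠ 0 := norm_ne_zero_iff.mpr hx
      have hy : (‖x‖⁻¹ • x) ∈ Metric.sphere (0 : EuclideanSpace ℝ (Fin n)) 1 := by
        simp [norm_smul, abs_of_nonneg (inv_nonneg.mpr (norm_nonneg x)), inv_mul_cancel₀ hxn]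
      have h7 : ‖x‖⁻¹ * ‖S x‖ ≤ ‖S x₀‖ := by
        have := hmax hy
        simp only [Set.mem_setOf_eq] at this
        rwa [_root_.map_smul, norm_smul, norm_inv, norm_norm] at this
      calc ‖S x‖ = ‖x‖ * (‖x‖⁻¹ * ‖S x‖) := by field_simp
        _ ≤ ‖x‖ * ‖S x₀‖ := mul_le_mul_of_nonneg_left h7 (norm_nonneg x)
        _ = ‖S x₀‖ * ‖x‖ := mul_comm _ _
  have hSx₀pos : 0 < ‖S x₀‖ := lt_of_lt_of_le hSpos hSle
  have hlam_nonneg : 0 ≤ lam := by rw [hlam_eq]; positivity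
  have hsn : matrixSpectralNorm A = ‖S‖ := rfl
  have hinner : ∀ x, (lam * (inner ℝ x₀ x : ℝ)) = (inner ℝ (S x₀) (S x) : ℝ) := by
    intro x
    have h1 : (inner ℝ (T x₀) x : ℝ) = inner ℝ (S x₀) (S x) := by
      show (inner ℝ ((ContinuousLinearMap.adjoint S) (S x₀)) x : ℝ) = _
      rw [ContinuousLinearMap.adjoint_inner_left]
    rw [← h1, heig', real_inner_smul_left]
  refine ⟨x₀, hx₀norm, fun x => ?_, fun x => ?_⟩
  · -- ‖A‖² |⟪v,x⟫| ≤ ‖AᵀA x‖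
    have hTx : Matrix.toEuclideanLin Aᵀ (Matrix.toEuclideanLin A x) = T x := by
      simp only [hT_def, ContinuousLinearMap.coe_comp', Function.comp_apply]
      have hAT : Aᵀ = Aᴴ := by
        ext i j; simp [Matrix.conjTranspose_apply]
      rw [hAT, Matrix.toEuclideanLin_conjTranspose_eq_adjoint,
        LinearMap.adjoint_eq_toCLM_adjoint]
      rfl
    rw [hTx]
    have h2 : lam * |(inner ℝ x₀ x : ℝ)| ≤ ‖T x‖ := by
      have h3 : |(inner ℝ x₀ (T x) : ℝ)| ≤ ‖T x‖ := by
        have := abs_real_inner_le_norm x₀ (T x)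
        rwa [hx₀norm, one_mul] at this
      have h4 : (inner ℝ x₀ (T x) : ℝ) = inner ℝ (S x₀) (S x) := by
        show (inner ℝ x₀ ((ContinuousLinearMap.adjoint S) (S x)) : ℝ) = _
        rw [ContinuousLinearMap.adjoint_inner_right]
      have h5 : lam * |(inner ℝ x₀ x : ℝ)| = |(inner ℝ x₀ (T x) : ℝ)| := by
        rw [h4, ← hinner x, abs_mul, abs_of_nonneg hlam_nonneg]
      rw [h5]
      exact h3
    refine le_trans ?_ h2
    apply mul_le_mul_of_nonneg_right _ (abs_nonneg _)
    rw [hsn, hlam_eq]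
    exact pow_le_pow_left₀ (norm_nonneg _) hSle 2
  · -- ‖A‖ |⟪v,x⟫| ≤ ‖A x‖
    rw [← hSA]
    have h5 : lam * |(inner ℝ x₀ x : ℝ)| ≤ ‖S x₀‖ * ‖S x‖ := by
      calc lam * |(inner ℝ x₀ x : ℝ)| = |lam * (inner ℝ x₀ x : ℝ)| := by
            rw [abs_mul, abs_of_nonneg hlam_nonneg]
        _ = |(inner ℝ (S x₀) (S x) : ℝ)| := by rw [hinner x]
        _ ≤ ‖S x₀‖ * ‖S x‖ := abs_real_inner_le_norm _ _
    rw [hlam_eq] at h5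
    have h6 : ‖S x₀‖ * |(inner ℝ x₀ x : ℝ)| ≤ ‖S x‖ := by
      have := mul_le_mul_of_nonneg_left h5 (le_of_lt (inv_pos.mpr hSx₀pos))
      calc ‖S x₀‖ * |(inner ℝ x₀ x : ℝ)|
          = ‖S x₀‖⁻¹ * (‖S x₀‖ ^ 2 * |(inner ℝ x₀ x : ℝ)|) := by field_simp
        _ ≤ ‖S x₀‖⁻¹ * (‖S x₀‖ * ‖S x‖) := this
        _ = ‖S x‖ := by field_simp
    exact le_trans (mul_le_mul_of_nonneg_right (hsn ▸ hSle) (abs_nonneg _)) h6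


lemma spectralNorm_pos {m n : ℕ} (A : Matrix (Fin m) (Fin n) ℝ) (hA : A ≠ 0) :
    0 < matrixSpectralNorm A := by
  apply norm_pos_iff.mpr
  intro h
  apply hA
  have h' : Matrix.toEuclideanLin A = 0 :=
    LinearMap.toContinuousLinearMap.injective (by rw [h]; rfl)
  simpa using Matrix.toEuclideanLin.injective (by rw [h']; simp)
/-- for nonzero `A`, independent standard Gaussian vectors `X₁, X₂`
and `θ > 0`, the Dixon estimator `T^d(θ,X) = θ max(√‖AᵀAX₁‖, ‖AX₂‖)` satisfies
`P(T^d(θ,X) ≤ ‖A‖) ≤ (2/π) θ⁻³`. -/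

theorem dixon_underestimation
    {m n : ℕ} (A : Matrix (Fin m) (Fin n) ℝ) (hA : A ≠ 0)
    {Ω : Type*} [MeasureSpace Ω] [IsProbabilityMeasure (ℙ : Measure Ω)]
    (X₁ X₂ : Ω → EuclideanSpace ℝ (Fin n))
    (hX₁ : Measure.map X₁ ℙ = stdGaussian n)
    (hX₂ : Measure.map X₂ ℙ = stdGaussian n)
    (hindep : IndepFun X₁ X₂ ℙ)
    (θ : ℝ) (hθ : 0 < θ) :
    ℙ {ω | θ * max
          (Real.sqrt ‖Matrix.toEuclideanLin Aᵀ (Matrix.toEuclideanLin A (X₁ ω))‖)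
          ‖Matrix.toEuclideanLin A (X₂ ω)‖ ≤ matrixSpectralNorm A} ≤
      ENNReal.ofReal (2 / Real.pi * (θ ^ 3)⁻¹) := by
  obtain ⟨v, hv, key1, key2⟩ := exists_good_vector A hA
  have hsNpos : 0 < matrixSpectralNorm A := spectralNorm_pos A hA
  set sN := matrixSpectralNorm A with hsN_def
  -- measurability of the random vectors
  have hne : (stdGaussian n) ≠ 0 := IsProbabilityMeasure.ne_zero _
  have hm1 : AEMeasurable X₁ ℙ := by
    by_contra hm
    exact hne ((Measure.map_of_not_aemeasurable hm) ▸ hX₁ : (0 : Measure _) = stdGaussian n).symm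
  have hm2 : AEMeasurable X₂ ℙ := by
    by_contra hm
    exact hne ((Measure.map_of_not_aemeasurable hm) ▸ hX₂ : (0 : Measure _) = stdGaussian n).symm
  -- continuity facts
  have hcA : Continuous fun x : EuclideanSpace ℝ (Fin n) => Matrix.toEuclideanLin A x :=
    (Matrix.toEuclideanLin A).continuous_of_finiteDimensional
  have hcT : Continuous fun x : EuclideanSpace ℝ (Fin n) =>
      Matrix.toEuclideanLin Aᵀ (Matrix.toEuclideanLin A x) :=
    ((Matrix.toEuclideanLin Aᵀ).continuous_of_finiteDimensional).comp hcA
  -- the two events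
  set E₁ : Set (EuclideanSpace ℝ (Fin n)) :=
    {x | Real.sqrt ‖Matrix.toEuclideanLin Aᵀ (Matrix.toEuclideanLin A x)‖ ≤ sN / θ} with hE₁_def
  set E₂ : Set (EuclideanSpace ℝ (Fin n)) :=
    {x | ‖Matrix.toEuclideanLin A x‖ ≤ sN / θ} with hE₂_def
  have hE₁ : MeasurableSet E₁ :=
    measurableSet_le ((continuous_sqrt.comp hcT.norm).measurable) measurable_const
  have hE₂ : MeasurableSet E₂ := measurableSet_le (hcA.norm.measurable) measurable_const
  have hev : {ω | θ * max
      (Real.sqrt ‖Matrix.toEuclideanLin Aᵀ (Matrix.toEuclideanLin A (X₁ ω))‖)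
      ‖Matrix.toEuclideanLin A (X₂ ω)‖ ≤ sN} = X₁ ⁻¹' E₁ ∩ X₂ ⁻¹' E₂ := by
    ext ω
    simp only [Set.mem_setOf_eq, Set.mem_inter_iff, Set.mem_preimage, hE₁_def, hE₂_def]
    rw [← le_div_iff₀' hθ, max_le_iff]
  rw [hev, hindep.measure_inter_preimage_eq_mul E₁ E₂ hE₁ hE₂]
  have f1 : ℙ (X₁ ⁻¹' E₁) = stdGaussian n E₁ := by
    rw [← hX₁, Measure.map_apply_of_aemeasurable hm1 hE₁]
  have f2 : ℙ (X₂ ⁻¹' E₂) = stdGaussian n E₂ := by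
    rw [← hX₂, Measure.map_apply_of_aemeasurable hm2 hE₂]
  -- inner-product measurability
  have hme : Measurable fun x : EuclideanSpace ℝ (Fin n) => (inner ℝ v x : ℝ) :=
    Continuous.measurable (continuous_const.inner continuous_id)
  have habs : ∀ a : ℝ, MeasurableSet {t : ℝ | |t| ≤ a} := by
    intro a
    have : {t : ℝ | |t| ≤ a} = Set.Icc (-a) a := by ext t; simp [abs_le]
    rw [this]; exact measurableSet_Icc
  have hproj : ∀ a : ℝ, stdGaussian n {x | |(inner ℝ v x : ℝ)| ≤ a} =
      gaussianReal 0 1 {t : ℝ | |t| ≤ a} := by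
    intro a
    rw [← stdGaussian_inner_map n v hv, Measure.map_apply hme (habs a)]
    rfl
  -- bound the first factor
  have hsub1 : E₁ ⊆ {x | |(inner ℝ v x : ℝ)| ≤ θ⁻¹ ^ 2} := by
    intro x hx
    simp only [hE₁_def, Set.mem_setOf_eq] at hx ⊢
    have h1 : ‖Matrix.toEuclideanLin Aᵀ (Matrix.toEuclideanLin A x)‖ ≤ (sN / θ) ^ 2 := by
      have h2 := pow_le_pow_left₀ (Real.sqrt_nonneg _) hx 2
      rwa [Real.sq_sqrt (norm_nonneg _)] at h2
    have h3 := le_trans (key1 x) h1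
    have h4 : (sN / θ) ^ 2 = sN ^ 2 * θ⁻¹ ^ 2 := by field_simp
    rw [h4] at h3
    exact le_of_mul_le_mul_left (by rw [hsN_def] at h3; exact h3) (by positivity)
  have hsub2 : E₂ ⊆ {x | |(inner ℝ v x : ℝ)| ≤ θ⁻¹} := by
    intro x hx
    simp only [hE₂_def, Set.mem_setOf_eq] at hx ⊢
    have h3 := le_trans (key2 x) hx
    have h4 : sN / θ = sN * θ⁻¹ := by field_simp
    rw [h4] at h3
    exact le_of_mul_le_mul_left (by rw [hsN_def] at h3; exact h3) hsNpos
  have hθi : 0 ≤ θ⁻¹ := by positivity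
  have b1 : ℙ (X₁ ⁻¹' E₁) ≤ ENNReal.ofReal ((√(2 * π))⁻¹ * (2 * θ⁻¹ ^ 2)) := by
    rw [f1]
    calc stdGaussian n E₁ ≤ stdGaussian n {x | |(inner ℝ v x : ℝ)| ≤ θ⁻¹ ^ 2} :=
          measure_mono hsub1
      _ = gaussianReal 0 1 {t : ℝ | |t| ≤ θ⁻¹ ^ 2} := hproj _
      _ ≤ ENNReal.ofReal ((√(2 * π))⁻¹ * (2 * θ⁻¹ ^ 2)) :=
          gaussian_small_ball _ (by positivity)
  have b2 : ℙ (X₂ ⁻¹' E₂) ≤ ENNReal.ofReal ((√(2 * π))⁻¹ * (2 * θ⁻¹)) := by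
    rw [f2]
    calc stdGaussian n E₂ ≤ stdGaussian n {x | |(inner ℝ v x : ℝ)| ≤ θ⁻¹} :=
          measure_mono hsub2
      _ = gaussianReal 0 1 {t : ℝ | |t| ≤ θ⁻¹} := hproj _
      _ ≤ ENNReal.ofReal ((√(2 * π))⁻¹ * (2 * θ⁻¹)) := gaussian_small_ball _ hθi
  calc ℙ (X₁ ⁻¹' E₁) * ℙ (X₂ ⁻¹' E₂)
      ≤ ENNReal.ofReal ((√(2 * π))⁻¹ * (2 * θ⁻¹ ^ 2)) *
        ENNReal.ofReal ((√(2 * π))⁻¹ * (2 * θ⁻¹)) := mul_le_mul' b1 b2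
    _ = ENNReal.ofReal (((√(2 * π))⁻¹ * (2 * θ⁻¹ ^ 2)) * ((√(2 * π))⁻¹ * (2 * θ⁻¹))) :=
        (ENNReal.ofReal_mul (by positivity)).symm
    _ = ENNReal.ofReal (2 / π * (θ ^ 3)⁻¹) := by
        congr 1
        have hs : (√(2 * π))⁻¹ * (√(2 * π))⁻¹ = (2 * π)⁻¹ := by
          rw [← mul_inv, Real.mul_self_sqrt (by positivity)]
        have hθ3 : θ⁻¹ ^ 2 * θ⁻¹ = (θ ^ 3)⁻¹ := by rw [← pow_succ, ← inv_pow]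
        have hπ := Real.pi_pos
        calc ((√(2 * π))⁻¹ * (2 * θ⁻¹ ^ 2)) * ((√(2 * π))⁻¹ * (2 * θ⁻¹))
            = ((√(2 * π))⁻¹ * (√(2 * π))⁻¹) * (4 * (θ⁻¹ ^ 2 * θ⁻¹)) := by ring
          _ = (2 * π)⁻¹ * (4 * (θ ^ 3)⁻¹) := by rw [hs, hθ3]
          _ = 2 / π * (θ ^ 3)⁻¹ := by field_simp; ring
end

section
/- Let ξ ~ N(0,1) and let η be a nonnegative integrable random variable independent of ξ. Then P(ξ² ≤ η) ≤ χ₁²(E[η]). -/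
open MeasureTheory ProbabilityTheory Real Matrix

noncomputable def phi : ℝ → ℝ := gaussianPDFReal 0 1
noncomputable def Pprim (u : ℝ) : ℝ := ∫ x in (0:ℝ)..u, phi x
noncomputable def Gfun (t : ℝ) : ℝ := Pprim (Real.sqrt t) - Pprim (-Real.sqrt t)

lemma phi_cont : Continuous phi := by
  unfold phi
  rw [gaussianPDFReal_def]
  continuity

lemma phi_nonneg (x : ℝ) : 0 ≤ phi x := gaussianPDFReal_nonneg 0 1 x

lemma phi_even (x : ℝ) : phi (-x) = phi x := by
  unfold phi gaussianPDFReal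
  norm_num

lemma sq_le_iff_mem_Icc {t : ℝ} (ht : 0 ≤ t) (x : ℝ) :
    x ^ 2 ≤ t ↔ x ∈ Set.Icc (-Real.sqrt t) (Real.sqrt t) := by
  rw [Set.mem_Icc, ← abs_le, ← Real.sqrt_sq_eq_abs]
  constructor
  · intro h; exact Real.sqrt_le_sqrt h
  · intro h
    have := Real.sqrt_le_sqrt (le_of_eq (Real.sq_sqrt ht).symm)
    nlinarith [Real.sq_sqrt ht, Real.sqrt_nonneg (x^2), Real.sq_sqrt (sq_nonneg x), abs_nonneg x]

lemma chiSq1CDF_eq_Gfun {t : ℝ} (ht : 0 ≤ t) : chiSq1CDF t = Gfun t := by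
  have hs : {x : ℝ | x ^ 2 ≤ t} = Set.Icc (-Real.sqrt t) (Real.sqrt t) := by
    ext x; exact sq_le_iff_mem_Icc ht x
  have hle : -Real.sqrt t ≤ Real.sqrt t := by
    have := Real.sqrt_nonneg t; linarith
  rw [chiSq1CDF, hs, gaussianReal_apply_eq_integral 0 one_ne_zero,
    ENNReal.toReal_ofReal (setIntegral_nonneg measurableSet_Icc
      (fun x _ => gaussianPDFReal_nonneg 0 1 x))]
  rw [MeasureTheory.integral_Icc_eq_integral_Ioc,
    ← intervalIntegral.integral_of_le hle]
  have h := intervalIntegral.integral_add_adjacent_intervals (μ := volume)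
      (phi_cont.intervalIntegrable (0:ℝ) (-Real.sqrt t))
      (phi_cont.intervalIntegrable (-Real.sqrt t) (Real.sqrt t))
  show (∫ x in (-Real.sqrt t)..Real.sqrt t, phi x)
      = Pprim (Real.sqrt t) - Pprim (-Real.sqrt t)
  rw [Pprim, Pprim]
  linarith

lemma Pprim_hasDerivAt (u : ℝ) : HasDerivAt Pprim (phi u) u :=
  (phi_cont.integral_hasStrictDerivAt 0 u).hasDerivAt

lemma Gfun_cont : Continuous Gfun := by
  have hP : Continuous Pprim := by
    have : Differentiable ℝ Pprim := fun u => (Pprim_hasDerivAt u).differentiableAt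
    exact this.continuous
  exact (hP.comp Real.continuous_sqrt).sub (hP.comp Real.continuous_sqrt.neg)

lemma Gfun_hasDerivAt {t : ℝ} (ht : 0 < t) :
    HasDerivAt Gfun (phi (Real.sqrt t) / Real.sqrt t) t := by
  have hst : Real.sqrt t ≠ 0 := ne_of_gt (Real.sqrt_pos.mpr ht)
  have h1 : HasDerivAt (fun s => Pprim (Real.sqrt s))
      (phi (Real.sqrt t) * (1 / (2 * Real.sqrt t))) t :=
    (Pprim_hasDerivAt (Real.sqrt t)).comp t (Real.hasDerivAt_sqrt (ne_of_gt ht))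
  have h2 : HasDerivAt (fun s => Pprim (-Real.sqrt s))
      (phi (-Real.sqrt t) * -(1 / (2 * Real.sqrt t))) t :=
    by
      have hh : HasDerivAt (fun s => -Real.sqrt s) (-(1 / (2 * Real.sqrt t))) t :=
        (Real.hasDerivAt_sqrt (ne_of_gt ht)).neg
      exact (Pprim_hasDerivAt (-Real.sqrt t)).comp t hh
  have := h1.sub h2
  refine this.congr_deriv ?_
  rw [phi_even]
  field_simp
  ring

lemma deriv_Gfun {t : ℝ} (ht : 0 < t) :
    deriv Gfun t = Real.exp (-t / 2) / (Real.sqrt (2 * Real.pi) * Real.sqrt t) := by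
  rw [(Gfun_hasDerivAt ht).deriv]
  unfold phi gaussianPDFReal
  have h1 : -(Real.sqrt t - 0) ^ 2 / (2 * ((1:NNReal):ℝ)) = -t / 2 := by
    rw [sub_zero, Real.sq_sqrt ht.le]; norm_num
  have h2 : 2 * Real.pi * ((1:NNReal):ℝ) = 2 * Real.pi := by norm_num
  rw [h1, h2]
  field_simp

lemma Gfun_concave : ConcaveOn ℝ (Set.Ici (0:ℝ)) Gfun := by
  have hint : interior (Set.Ici (0:ℝ)) = Set.Ioi 0 := interior_Ici
  apply AntitoneOn.concaveOn_of_deriv (convex_Ici 0) Gfun_cont.continuousOn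
  · rw [hint]
    exact fun t ht => ((Gfun_hasDerivAt ht).differentiableAt).differentiableWithinAt
  · rw [hint]
    intro a ha b hb hab
    rw [deriv_Gfun ha, deriv_Gfun hb]
    have h2π : 0 < Real.sqrt (2 * Real.pi) := Real.sqrt_pos.mpr (by positivity)
    have hsa : 0 < Real.sqrt a := Real.sqrt_pos.mpr ha
    have hsb : 0 < Real.sqrt b := Real.sqrt_pos.mpr hb
    apply div_le_div₀ (Real.exp_pos _).le
    · exact Real.exp_le_exp.mpr (by linarith)
    · positivity
    · have := Real.sqrt_le_sqrt (le_of_lt (lt_of_lt_of_le ha hab))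
      have hs : Real.sqrt a ≤ Real.sqrt b := Real.sqrt_le_sqrt hab
      nlinarith

lemma chiSq1CDF_concave : ConcaveOn ℝ (Set.Ici (0:ℝ)) chiSq1CDF :=
  Gfun_concave.congr (fun _ ht => (chiSq1CDF_eq_Gfun ht).symm)

lemma chiSq1CDF_contOn : ContinuousOn chiSq1CDF (Set.Ici (0:ℝ)) :=
  (Gfun_cont.continuousOn).congr (fun _ ht => chiSq1CDF_eq_Gfun ht)

lemma chiSq1CDF_mono : Monotone chiSq1CDF := by
  intro a b hab
  exact ENNReal.toReal_mono (measure_ne_top _ _)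
    (measure_mono (fun x hx => le_trans hx hab))

lemma chiSq1CDF_nonneg (t : ℝ) : 0 ≤ chiSq1CDF t := ENNReal.toReal_nonneg

lemma chiSq1CDF_le_one (t : ℝ) : chiSq1CDF t ≤ 1 := by
  rw [chiSq1CDF]
  have : (gaussianReal 0 1) {x : ℝ | x ^ 2 ≤ t} ≤ 1 := prob_le_one
  exact ENNReal.toReal_le_of_le_ofReal zero_le_one (by simpa using this)


/-- if `ξ ~ N(0,1)` and `η ≥ 0` is integrable and independent of `ξ`,
then `P(ξ² ≤ η) ≤ χ₁²(E[η])`. -/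
theorem prob_sq_le_indep_le_chiSq1CDF_expectation
    {Ω : Type*} [MeasureSpace Ω] [IsProbabilityMeasure (ℙ : Measure Ω)]
    (ξ η : Ω → ℝ)
    (hξ : Measure.map ξ ℙ = gaussianReal 0 1)
    (hη0 : ∀ ω, 0 ≤ η ω) (hηint : Integrable η ℙ)
    (hindep : IndepFun ξ η ℙ) :
    ℙ {ω | ξ ω ^ 2 ≤ η ω} ≤ ENNReal.ofReal (chiSq1CDF (∫ ω, η ω)) := by
  have hξae : AEMeasurable ξ ℙ := by
    by_contra h
    rw [Measure.map_of_not_aemeasurable h] at hξ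
    have h1 : (gaussianReal 0 1) Set.univ = 1 := measure_univ
    rw [← hξ] at h1
    simp at h1
  have hηae : AEMeasurable η ℙ := hηint.aemeasurable
  set ξ' := hξae.mk ξ with hξ'def
  set η' := hηae.mk η with hη'def
  have hξ'm : Measurable ξ' := hξae.measurable_mk
  have hη'm : Measurable η' := hηae.measurable_mk
  have hξeq : ξ =ᵐ[ℙ] ξ' := hξae.ae_eq_mk
  have hηeq : η =ᵐ[ℙ] η' := hηae.ae_eq_mk
  have hindep' : IndepFun η' ξ' ℙ := (hindep.congr hξeq hηeq).symm
  have hset : ℙ {ω | ξ ω ^ 2 ≤ η ω} = ℙ {ω | ξ' ω ^ 2 ≤ η' ω} := by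
    apply measure_congr
    filter_upwards [hξeq, hηeq] with ω h1 h2
    show (ξ ω ^ 2 ≤ η ω) = (ξ' ω ^ 2 ≤ η' ω)
    rw [h1, h2]
  have hmap : Measure.map (fun ω => (η' ω, ξ' ω)) ℙ
      = (Measure.map η' ℙ).prod (Measure.map ξ' ℙ) :=
    (indepFun_iff_map_prod_eq_prod_map_map hη'm.aemeasurable hξ'm.aemeasurable).mp hindep'
  have hγ : Measure.map ξ' ℙ = gaussianReal 0 1 := by
    rw [← Measure.map_congr hξeq]; exact hξ
  set ν := Measure.map η' ℙ with hνdef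
  have hS : MeasurableSet {p : ℝ × ℝ | p.2 ^ 2 ≤ p.1} :=
    measurableSet_le ((measurable_snd.pow_const 2)) measurable_fst
  have key : ℙ {ω | ξ' ω ^ 2 ≤ η' ω}
      = ∫⁻ y, (gaussianReal 0 1) {x : ℝ | x ^ 2 ≤ y} ∂ν := by
    have hpre : (fun ω => (η' ω, ξ' ω)) ⁻¹' {p : ℝ × ℝ | p.2 ^ 2 ≤ p.1}
        = {ω | ξ' ω ^ 2 ≤ η' ω} := rfl
    rw [← hpre, ← Measure.map_apply (hη'm.prodMk hξ'm) hS, hmap, hγ,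
      Measure.prod_apply hS]
    rfl
  have hmeasF : Measurable chiSq1CDF := chiSq1CDF_mono.measurable
  have hpoint : ∀ y : ℝ, (gaussianReal 0 1) {x : ℝ | x ^ 2 ≤ y}
      = ENNReal.ofReal (chiSq1CDF y) := fun y => by
    rw [chiSq1CDF, ENNReal.ofReal_toReal (measure_ne_top _ _)]
  have h4 : ∫⁻ y, (gaussianReal 0 1) {x : ℝ | x ^ 2 ≤ y} ∂ν
      = ∫⁻ ω, ENNReal.ofReal (chiSq1CDF (η ω)) ∂ℙ := by
    simp_rw [hpoint]
    rw [hνdef, lintegral_map hmeasF.ennreal_ofReal hη'm]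
    refine lintegral_congr_ae ?_
    filter_upwards [hηeq] with ω h
    rw [h]
  have hcomp : Integrable (fun ω => chiSq1CDF (η ω)) ℙ := by
    apply Integrable.mono' (integrable_const (1:ℝ))
    · exact (hmeasF.comp_aemeasurable hηae).aestronglyMeasurable
    · filter_upwards with ω
      rw [Real.norm_eq_abs, abs_of_nonneg (chiSq1CDF_nonneg _)]
      exact chiSq1CDF_le_one _
  have h5 : ∫⁻ ω, ENNReal.ofReal (chiSq1CDF (η ω)) ∂ℙ
      = ENNReal.ofReal (∫ ω, chiSq1CDF (η ω) ∂ℙ) :=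
    (ofReal_integral_eq_lintegral_ofReal hcomp
      (Filter.Eventually.of_forall fun ω => chiSq1CDF_nonneg _)).symm
  have hjensen : ∫ ω, chiSq1CDF (η ω) ∂ℙ ≤ chiSq1CDF (∫ ω, η ω) :=
    chiSq1CDF_concave.le_map_integral chiSq1CDF_contOn isClosed_Ici
      (Filter.Eventually.of_forall hη0) hηint hcomp
  rw [hset, key, h4, h5]
  exact ENNReal.ofReal_le_ofReal hjensen
end
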